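/- The number of permutations of {1, ..., n} that avoid the pattern (1,2,3) (i.e., have no increasing subsequence of length 3) equals the n-th Catalan number. -/

import Mathlib

open List

open PowerSeries Finset

/-- Generating function of the Catalan numbers over `ℕ`. -/
noncomputable def catGF : PowerSeries ℕ := PowerSeries.mk catalan

/-- `k`-fold convolution of Catalan numbers: coefficient `m` of `catGF ^ k`. -/
noncomputable def cconv (k m : ℕ) : ℕ := PowerSeries.coeff m (catGF ^ k)

lemma cconv_one (m : ℕ) : cconv 1 m = catalan m := by
  simp [cconv, catGF]

lemma cconv_zero_right (k : ℕ) : cconv k 0 = 1 := by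
  have : constantCoeff catGF = 1 := by
    simp [catGF, ← PowerSeries.coeff_zero_eq_constantCoeff]
  simp [cconv, PowerSeries.coeff_zero_eq_constantCoeff, map_pow, this]

lemma cconv_zero_left (m : ℕ) : cconv 0 m = if m = 0 then 1 else 0 := by
  simp [cconv, PowerSeries.coeff_one]

lemma catGF_eq : catGF = 1 + PowerSeries.X * catGF ^ 2 := by
  ext m
  cases m with
  | zero => simp [catGF]
  | succ m =>
    rw [map_add, PowerSeries.coeff_succ_X_mul, PowerSeries.coeff_one, if_neg (Nat.succ_ne_zero m),
      zero_add, sq, PowerSeries.coeff_mul]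
    simp only [catGF, PowerSeries.coeff_mk]
    exact catalan_succ' m

/-- Claim B : from `F = 1 + X F²`. -/
lemma cconv_rec (k m : ℕ) : cconv (k+1) (m+1) = cconv k (m+1) + cconv (k+2) m := by
  have h : catGF ^ (k+1) = catGF ^ k + PowerSeries.X * catGF ^ (k+2) := by
    calc catGF ^ (k+1) = catGF ^ k * catGF := by ring
    _ = catGF ^ k * (1 + PowerSeries.X * catGF ^ 2) := by rw [← catGF_eq]
    _ = catGF ^ k + PowerSeries.X * catGF ^ (k+2) := by ring
  simp [cconv, h, PowerSeries.coeff_succ_X_mul]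

/-- Claim A. -/
lemma cconv_sum (m k : ℕ) :
    ∑ e ∈ Finset.range (m+1), cconv (k+e) (m-e) = cconv (k+1) m := by
  induction m generalizing k with
  | zero => simp [cconv_zero_right]
  | succ m ih =>
    rw [Finset.sum_range_succ'] -- splits off e = 0
    have h1 : ∑ e ∈ Finset.range (m+1), cconv (k+(e+1)) (m+1-(e+1)) =
        ∑ e ∈ Finset.range (m+1), cconv ((k+1)+e) (m-e) := by
      apply Finset.sum_congr rfl
      intro e he
      congr 1
      · ring
      · omega
    rw [h1, ih (k+1)]
    simp only [Nat.sub_zero, Nat.add_zero]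
    rw [cconv_rec k m]
    ring

lemma cconv_two (m : ℕ) : cconv 2 m = catalan (m + 1) := by
  rw [catalan_succ']
  simp only [cconv, sq, PowerSeries.coeff_mul, catGF, PowerSeries.coeff_mk]


/-- `l` has an increasing subsequence of length 3. -/
def HasInc (l : List ℕ) : Prop := ∃ a b c : ℕ, a < b ∧ b < c ∧ [a, b, c] <+ l

lemma HasInc.sublist {l l' : List ℕ} (h : l <+ l') (hi : HasInc l) : HasInc l' := by
  obtain ⟨a, b, c, h1, h2, h3⟩ := hi
  exact ⟨a, b, c, h1, h2, h3.trans h⟩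

/-- Length of the maximal strictly decreasing prefix. -/
def dp : List ℕ → ℕ
  | [] => 0
  | a :: t =>
    match t with
    | [] => 1
    | b :: _ => if b < a then dp t + 1 else 1

@[simp] lemma dp_nil : dp [] = 0 := rfl
@[simp] lemma dp_single (a : ℕ) : dp [a] = 1 := rfl
lemma dp_cons_cons (a b : ℕ) (t : List ℕ) :
    dp (a :: b :: t) = if b < a then dp (b :: t) + 1 else 1 := rfl

lemma dp_le_length (l : List ℕ) : dp l ≤ l.length := by
  induction l with
  | nil => simp
  | cons a t ih =>
    cases t with
    | nil => simp
    | cons b t' =>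
      rw [dp_cons_cons]
      split <;> simp_all <;> omega

lemma one_le_dp {l : List ℕ} (h : l ≠ []) : 1 ≤ dp l := by
  cases l with
  | nil => simp at h
  | cons a t => cases t with
    | nil => simp
    | cons b t' => rw [dp_cons_cons]; split <;> omega

lemma take_dp_pairwise (l : List ℕ) : (l.take (dp l)).Pairwise (· > ·) := by
  induction l with
  | nil => simp
  | cons a t ih =>
    cases t with
    | nil => simp
    | cons b t' =>
      rw [dp_cons_cons]
      split
      · rename_i hba
        rw [List.take_succ_cons]
        refine List.Pairwise.cons ?_ ih
        intro x hx
        have h1 : 1 ≤ dp (b :: t') := one_le_dp (by simp)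
        have : (b :: t').take (dp (b :: t')) = b :: t'.take (dp (b :: t') - 1) := by
          cases h : dp (b :: t') with
          | zero => omega
          | succ k => simp [h, List.take_cons]
        rw [this] at hx ih
        rcases List.mem_cons.1 hx with rfl | hx'
        · exact hba
        · have := (List.pairwise_cons.1 ih).1 x hx'
          omega
      · simp

lemma le_dp_of_take_pairwise {l : List ℕ} {j : ℕ} (hj : j ≤ l.length)
    (hp : (l.take j).Pairwise (· > ·)) : j ≤ dp l := by
  induction l generalizing j with
  | nil => simpa using hj
  | cons a t ih =>
    cases j with
    | zero => omega
    | succ j' =>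
      cases t with
      | nil => simp at hj ⊢; omega
      | cons b t' =>
        rw [dp_cons_cons]
        rcases Nat.eq_zero_or_pos j' with rfl | hj'
        · have := one_le_dp (l := b :: t') (by simp)
          split <;> omega
        · rw [List.take_succ_cons] at hp
          have hmem : b ∈ (b :: t').take j' := by
            cases j' with
            | zero => omega
            | succ k => simp [List.take_succ_cons]
          have hab : a > b := (List.pairwise_cons.1 hp).1 b hmem
          rw [if_pos hab]
          have : j' ≤ dp (b :: t') := ih (by simpa using hj) (List.pairwise_cons.1 hp).2
          omega

lemma take_pairwise_of_le_dp {l : List ℕ} {j : ℕ} (hj : j ≤ dp l) :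
    (l.take j).Pairwise (· > ·) := by
  have h1 : l.take j = (l.take (dp l)).take j := by
    rw [List.take_take, min_eq_left hj]
  rw [h1]
  exact (take_dp_pairwise l).sublist (List.take_sublist _ _)

lemma dp_ge_of_pairwise_prefix (A B : List ℕ) (hA : A.Pairwise (· > ·)) :
    A.length ≤ dp (A ++ B) := by
  apply le_dp_of_take_pairwise
  · simp
  · rw [List.take_left]; exact hA

lemma dp_cons_of_forall_lt {M : ℕ} {B : List ℕ} (h : ∀ x ∈ B, x < M) :
    dp (M :: B) = dp B + 1 := by
  cases B with
  | nil => simp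
  | cons b t => rw [dp_cons_cons, if_pos (h b (by simp))]

lemma dp_middle {A B : List ℕ} {M : ℕ} (hne : A ≠ []) (hA : A.Pairwise (· > ·))
    (hlt : ∀ x ∈ A, x < M) : dp (A ++ M :: B) = A.length := by
  refine le_antisymm ?_ (dp_ge_of_pairwise_prefix A (M :: B) hA)
  by_contra h
  push_neg at h
  have h2 : (A ++ M :: B).take (A.length + 1) = A ++ [M] := by
    rw [List.take_append]; simp
  have h3 : (A ++ [M]).Pairwise (· > ·) := by
    rw [← h2]; exact take_pairwise_of_le_dp h
  obtain ⟨a, ha⟩ := List.exists_mem_of_ne_nil A hne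
  have := (List.pairwise_append.1 h3).2.2 a ha M (by simp)
  exact absurd (hlt a ha) (by omega)

/-- Key decomposition lemma: inserting a maximal element `M` between `A` and `B`. -/
lemma hasInc_append_max {A B : List ℕ} {M : ℕ} (h : ∀ x ∈ A ++ B, x < M) :
    HasInc (A ++ M :: B) ↔ HasInc (A ++ B) ∨ ¬ A.Pairwise (· ≥ ·) := by
  constructor
  · rintro ⟨a, b, c, hab, hbc, hsub⟩
    rw [List.sublist_append_iff] at hsub
    obtain ⟨l₁, l₂, heq, hl₁, hl₂⟩ := hsub
    rcases List.sublist_cons_iff.1 hl₂ with h2 | ⟨r, rfl, hr⟩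
    · left
      exact ⟨a, b, c, hab, hbc, heq ▸ (hl₁.append h2)⟩
    · rcases l₁ with _ | ⟨x, _ | ⟨y, _ | ⟨z, l'⟩⟩⟩
      · -- a = M, so b ∈ B with b < M = a : contradiction
        simp only [List.nil_append, List.cons.injEq] at heq
        obtain ⟨rfl, rfl⟩ : a = M ∧ r = [b, c] := ⟨heq.1, heq.2.symm⟩
        have hb : b ∈ B := hr.subset (by simp)
        have := h b (by simp [hb])
        omega
      · -- b = M, so c ∈ B with c < M = b : contradiction
        simp only [List.cons_append, List.nil_append, List.cons.injEq] at heq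
        obtain ⟨rfl, rfl⟩ : b = M ∧ r = [c] := ⟨heq.2.1, heq.2.2.symm⟩
        have hc : c ∈ B := hr.subset (by simp)
        have := h c (by simp [hc])
        omega
      · -- c = M, [a,b] <+ A with a < b : A not decreasing
        simp only [List.cons_append, List.nil_append, List.cons.injEq] at heq
        obtain ⟨rfl, rfl⟩ : x = a ∧ y = b := ⟨heq.1.symm, heq.2.1.symm⟩
        right
        intro hpw
        have := List.pairwise_iff_forall_sublist.1 hpw hl₁
        omega
      · exfalso
        apply_fun List.length at heq
        simp at heq
  · rintro (⟨a, b, c, hab, hbc, hsub⟩ | hA)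
    · rw [List.sublist_append_iff] at hsub
      obtain ⟨l₁, l₂, heq, hl₁, hl₂⟩ := hsub
      exact ⟨a, b, c, hab, hbc, by
        rw [heq]
        exact hl₁.append (hl₂.trans (List.sublist_cons_self M B))⟩
    · rw [List.pairwise_iff_forall_sublist] at hA
      push_neg at hA
      obtain ⟨a, b, hsub, hab⟩ := hA
      refine ⟨a, b, M, by omega, ?_, ?_⟩
      · exact h b (by simp [hsub.subset (show b ∈ [a,b] by simp)])
      · have : [a, b] ++ [M] <+ A ++ M :: B :=
          hsub.append (by simp)
        simpa using this

open scoped Classical in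
/-- The finset of 123-avoiding permutations (as lists) of `{0,…,n-1}`. -/
noncomputable def avF (n : ℕ) : Finset (List ℕ) :=
  ((List.range n).permutations).toFinset.filter (fun l => ¬ HasInc l)

lemma mem_avF {n : ℕ} {l : List ℕ} : l ∈ avF n ↔ l.Perm (List.range n) ∧ ¬ HasInc l := by
  simp [avF, List.mem_permutations]

lemma avF_length {n : ℕ} {l : List ℕ} (h : l ∈ avF n) : l.length = n := by
  simpa using (mem_avF.1 h).1.length_eq

lemma avF_nodup {n : ℕ} {l : List ℕ} (h : l ∈ avF n) : l.Nodup :=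
  (mem_avF.1 h).1.nodup_iff.2 List.nodup_range

lemma avF_mem_lt {n : ℕ} {l : List ℕ} (h : l ∈ avF n) {x : ℕ} (hx : x ∈ l) : x < n := by
  have := (mem_avF.1 h).1.mem_iff.1 hx
  simpa using this

/-- Structure of an avoiding permutation of `{0,…,n}` relative to its maximum `n`. -/
lemma avF_decomp {n : ℕ} {σ : List ℕ} (hσ : σ ∈ avF (n+1)) :
    ∃ A B : List ℕ, σ = A ++ n :: B ∧ (A ++ B) ∈ avF n ∧ A.Pairwise (· > ·) ∧
      σ.erase n = A ++ B ∧
      dp σ = (if A = [] then dp (A ++ B) + 1 else A.length) ∧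
      A.length ≤ dp (A ++ B) := by
  have hmem : (n : ℕ) ∈ σ := (mem_avF.1 hσ).1.mem_iff.2 (by simp)
  obtain ⟨A, B, rfl⟩ := List.append_of_mem hmem
  have hnd : (A ++ n :: B).Nodup := avF_nodup hσ
  rw [List.nodup_append] at hnd
  have hnA : n ∉ A := fun hA => hnd.2.2 n hA n (by simp) rfl
  have hnB : n ∉ B := by
    have := hnd.2.1
    simp [List.nodup_cons] at this
    exact this.1
  have hbound : ∀ x ∈ A ++ B, x < n := by
    intro x hx
    have hx' : x ∈ A ++ n :: B := by
      rcases List.mem_append.1 hx with h | h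
      · exact List.mem_append.2 (Or.inl h)
      · exact List.mem_append.2 (Or.inr (by simp [h]))
    have h1 : x < n + 1 := avF_mem_lt hσ hx'
    have h2 : x ≠ n := by
      rintro rfl
      rcases List.mem_append.1 hx with h | h
      · exact hnA h
      · exact hnB h
    omega
  have hperm : (A ++ B).Perm (List.range n) := by
    have h1 : (A ++ n :: B).Perm (List.range (n+1)) := (mem_avF.1 hσ).1
    have h2 : (A ++ n :: B).Perm (n :: (A ++ B)) := List.perm_middle
    have h3 : (List.range (n+1)).Perm (n :: List.range n) := by
      rw [List.range_succ]
      exact List.perm_append_singleton n _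
    exact (h2.symm.trans (h1.trans h3)).cons_inv
  have hni : ¬ HasInc (A ++ n :: B) := (mem_avF.1 hσ).2
  rw [hasInc_append_max hbound] at hni
  push_neg at hni
  obtain ⟨hniAB, hApw⟩ := hni
  have hApw' : A.Pairwise (· > ·) := by
    have hAnd : A.Nodup := hnd.1
    have := hApw.and hAnd
    exact this.imp (fun {a b} ⟨h1, h2⟩ => lt_of_le_of_ne h1 (Ne.symm h2))
  have herase : (A ++ n :: B).erase n = A ++ B := by
    rw [List.erase_append_right _ hnA, List.erase_cons_head]
  have hdp : dp (A ++ n :: B) = (if A = [] then dp (A ++ B) + 1 else A.length) := by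
    split
    · rename_i hAe
      subst hAe
      simp only [List.nil_append]
      exact dp_cons_of_forall_lt (fun x hx => hbound x (by simpa using hx))
    · rename_i hAe
      exact dp_middle hAe hApw' (fun x hx => hbound x (List.mem_append.2 (Or.inl hx)))
  exact ⟨A, B, rfl, mem_avF.2 ⟨hperm, hniAB⟩, hApw', herase, hdp,
    dp_ge_of_pairwise_prefix A B hApw'⟩

/-- Inserting the new maximum at the front. -/
lemma avF_cons_max {n : ℕ} {π : List ℕ} (hπ : π ∈ avF n) : (n :: π) ∈ avF (n+1) := by
  obtain ⟨hperm, hni⟩ := mem_avF.1 hπ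
  refine mem_avF.2 ⟨?_, ?_⟩
  · rw [List.range_succ]
    exact (hperm.cons n).trans (List.perm_append_singleton n _).symm
  · have hbound : ∀ x ∈ ([] : List ℕ) ++ π, x < n := fun x hx => avF_mem_lt hπ (by simpa using hx)
    have := hasInc_append_max (A := []) (B := π) (M := n) hbound
    simp only [List.nil_append] at this
    rw [this]
    rintro (h | h)
    · exact hni h
    · exact h List.Pairwise.nil

/-- Inserting the new maximum after `c` elements of a decreasing prefix. -/
lemma avF_insert_max {n c : ℕ} {π : List ℕ} (hπ : π ∈ avF n) (hc1 : 1 ≤ c) (hcd : c ≤ dp π) :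
    (π.take c ++ n :: π.drop c) ∈ avF (n+1) ∧
      dp (π.take c ++ n :: π.drop c) = c ∧
      (π.take c ++ n :: π.drop c).erase n = π := by
  have hπlen : π.length = n := avF_length hπ
  have hcn : c ≤ n := le_trans hcd (by rw [← hπlen]; exact dp_le_length π)
  have hA : (π.take c).Pairwise (· > ·) := take_pairwise_of_le_dp hcd
  have hAlen : (π.take c).length = c := by
    rw [List.length_take]
    omega
  have hbound : ∀ x ∈ π.take c ++ π.drop c, x < n := by
    rw [List.take_append_drop]
    exact fun x hx => avF_mem_lt hπ hx
  have hmem : ∀ x ∈ π.take c, x < n := fun x hx =>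
    avF_mem_lt hπ ((List.take_sublist c π).subset hx)
  have hne : π.take c ≠ [] := by
    intro h
    rw [h] at hAlen
    simp at hAlen
    omega
  refine ⟨mem_avF.2 ⟨?_, ?_⟩, ?_, ?_⟩
  · have h2 : (π.take c ++ n :: π.drop c).Perm (n :: π) := by
      have := List.perm_middle (a := n) (l₁ := π.take c) (l₂ := π.drop c)
      rwa [List.take_append_drop] at this
    rw [List.range_succ]
    exact h2.trans (((mem_avF.1 hπ).1.cons n).trans (List.perm_append_singleton n _).symm)
  · rw [hasInc_append_max hbound]
    rintro (h | h)
    · rw [List.take_append_drop] at h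
      exact (mem_avF.1 hπ).2 h
    · exact h (hA.imp le_of_lt)
  · rw [dp_middle hne hA hmem]
    exact hAlen
  · have hnA : n ∉ π.take c := fun h => lt_irrefl n (hmem n h)
    rw [List.erase_append_right _ hnA, List.erase_cons_head, List.take_append_drop]

open scoped Classical in
/-- The key recurrence, via the insertion bijection. -/
lemma K1 (n c : ℕ) (hc : 1 ≤ c) :
    ((avF (n+1)).filter (fun l => dp l = c)).card
      = ((avF n).filter (fun l => dp l = c - 1)).card
        + ((avF n).filter (fun l => c ≤ dp l)).card := by
  have hdisj : Disjoint ((avF n).filter (fun l => dp l = c - 1))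
      ((avF n).filter (fun l => c ≤ dp l)) := by
    rw [Finset.disjoint_filter]
    intro x _ h1 h2
    omega
  rw [← Finset.card_union_of_disjoint hdisj, ← Finset.filter_or]
  apply Finset.card_bij (fun σ _ => σ.erase n)
  · -- maps into target
    intro σ hσ
    rw [Finset.mem_filter] at hσ
    obtain ⟨hσ', hdpσ⟩ := hσ
    obtain ⟨A, B, rfl, hAB, hApw, herase, hdp, hle⟩ := avF_decomp hσ'
    rw [herase]
    rw [Finset.mem_filter]
    refine ⟨hAB, ?_⟩
    split at hdp
    · left; omega
    · right
      rename_i hAne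
      rw [hdp] at hdpσ
      omega
  · -- injective
    intro σ₁ hσ₁ σ₂ hσ₂ heq
    rw [Finset.mem_filter] at hσ₁ hσ₂
    obtain ⟨A₁, B₁, rfl, hAB₁, _, herase₁, hdp₁, hle₁⟩ := avF_decomp hσ₁.1
    obtain ⟨A₂, B₂, rfl, hAB₂, _, herase₂, hdp₂, hle₂⟩ := avF_decomp hσ₂.1
    rw [herase₁, herase₂] at heq
    have hd₁ := hσ₁.2
    have hd₂ := hσ₂.2
    rw [hdp₁] at hd₁
    rw [hdp₂] at hd₂
    have hcase : A₁ = [] ↔ A₂ = [] := by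
      constructor
      · intro h1
        by_contra h2
        rw [if_pos h1] at hd₁
        rw [if_neg h2] at hd₂
        rw [heq] at hd₁
        omega
      · intro h1
        by_contra h2
        rw [if_pos h1] at hd₂
        rw [if_neg h2] at hd₁
        rw [← heq] at hd₂
        omega
    rcases eq_or_ne A₁ ([] : List ℕ) with h1 | h1
    · have h2 := hcase.1 h1
      subst h1; subst h2
      simpa using heq
    · have h2 : A₂ ≠ [] := fun h => h1 (hcase.2 h)
      rw [if_neg h1] at hd₁
      rw [if_neg h2] at hd₂
      have hA : A₁ = A₂ := by
        have e1 : A₁ = (A₁ ++ B₁).take c := by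
          rw [← hd₁, List.take_left]
        have e2 : A₂ = (A₂ ++ B₂).take c := by
          rw [← hd₂, List.take_left]
        rw [e1, e2, heq]
      subst hA
      have hB : B₁ = B₂ := by
        have := heq
        rwa [List.append_cancel_left_eq] at this
      rw [hB]
  · -- surjective
    intro π hπ
    rw [Finset.mem_filter] at hπ
    obtain ⟨hπ', hcond⟩ := hπ
    rcases hcond with hcond | hcond
    · -- π comes from n :: π
      refine ⟨n :: π, ?_, by simp⟩
      rw [Finset.mem_filter]
      refine ⟨avF_cons_max hπ', ?_⟩
      have : dp (n :: π) = dp π + 1 :=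
        dp_cons_of_forall_lt (fun x hx => avF_mem_lt hπ' hx)
      -- need : dp π = c - 1 → dp π + 1 = c.  Needs c ≥ 1 and, if c = 1, dp π = 0.
      omega
    · -- π comes from inserting n after c elements
      obtain ⟨hmem, hdpeq, heraseeq⟩ := avF_insert_max hπ' hc hcond
      exact ⟨_, Finset.mem_filter.2 ⟨hmem, hdpeq⟩, heraseeq⟩

open scoped Classical in
lemma card_filter_le_dp (n c : ℕ) :
    ((avF n).filter (fun l => c ≤ dp l)).card
      = ∑ d ∈ Finset.Icc c n, ((avF n).filter (fun l => dp l = d)).card := by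
  have hsplit : (avF n).filter (fun l => c ≤ dp l)
      = (Finset.Icc c n).biUnion (fun d => (avF n).filter (fun l => dp l = d)) := by
    ext l
    simp only [Finset.mem_filter, Finset.mem_biUnion, Finset.mem_Icc]
    constructor
    · rintro ⟨hl, hcd⟩
      exact ⟨dp l, ⟨hcd, le_trans (dp_le_length l) (le_of_eq (avF_length hl))⟩, hl, rfl⟩
    · rintro ⟨d, ⟨hcd, _⟩, hl, rfl⟩
      exact ⟨hl, hcd⟩
  rw [hsplit]
  apply Finset.card_biUnion
  intro d₁ _ d₂ _ hne
  simp only [Function.onFun]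
  rw [Finset.disjoint_filter]
  intro x _ h1 h2
  exact hne (h1.symm.trans h2)

open scoped Classical in
lemma card_dp_zero (n : ℕ) :
    ((avF n).filter (fun l => dp l = 0)).card = if n = 0 then 1 else 0 := by
  rcases Nat.eq_zero_or_pos n with rfl | hn
  · have h0 : avF 0 = {([] : List ℕ)} := by
      ext l
      simp only [mem_avF, Finset.mem_singleton, List.range_zero]
      constructor
      · rintro ⟨hp, _⟩
        exact hp.eq_nil
      · rintro rfl
        refine ⟨List.Perm.refl _, ?_⟩
        rintro ⟨a, b, c, _, _, hs⟩
        simpa using hs.length_le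
    rw [h0, Finset.filter_singleton]
    simp
  · rw [if_neg (by omega)]
    rw [Finset.card_eq_zero, Finset.filter_eq_empty_iff]
    intro l hl
    have : l ≠ [] := by
      intro h
      have := avF_length hl
      rw [h] at this
      simp at this
      omega
    have := one_le_dp this
    omega

open scoped Classical in
lemma card_dp_eq (n : ℕ) : ∀ c, 1 ≤ c → c ≤ n →
    ((avF n).filter (fun l => dp l = c)).card = cconv c (n - c) := by
  induction n with
  | zero => intro c h1 h2; omega
  | succ n ih =>
    intro c hc1 hc2
    rw [K1 n c hc1, card_filter_le_dp n c]
    have hterm2 : ∑ d ∈ Finset.Icc c n, ((avF n).filter (fun l => dp l = d)).card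
        = ∑ d ∈ Finset.Icc c n, cconv d (n - d) := by
      apply Finset.sum_congr rfl
      intro d hd
      rw [Finset.mem_Icc] at hd
      exact ih d (le_trans hc1 hd.1) hd.2
    rw [hterm2]
    have hterm1 : ((avF n).filter (fun l => dp l = c - 1)).card = cconv (c-1) (n+1-c) := by
      rcases eq_or_lt_of_le hc1 with h1 | h1
      · -- c = 1
        subst h1
        simp only [Nat.sub_self]
        rw [card_dp_zero n, cconv_zero_left]
        simp
      · -- c ≥ 2
        have := ih (c-1) (by omega) (by omega)
        rw [this]
        congr 1
        omega
    rw [hterm1]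
    rcases Nat.lt_or_ge n c with hcn | hcn
    · -- c = n + 1
      have hceq : c = n + 1 := by omega
      subst hceq
      rw [Finset.Icc_eq_empty (by omega), Finset.sum_empty]
      simp only [Nat.sub_self, Nat.add_sub_cancel_left]
      rw [cconv_zero_right, cconv_zero_right]
      omega
    · -- c ≤ n
      have hsum : ∑ d ∈ Finset.Icc c n, cconv d (n - d)
          = ∑ e ∈ Finset.range (n - c + 1), cconv (c + e) (n - c - e) := by
        rw [← Finset.Ico_add_one_right_eq_Icc, Finset.sum_Ico_eq_sum_range]
        apply Finset.sum_congr (by congr 1; omega)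
        intro e _
        congr 1
        omega
      rw [hsum, cconv_sum (n - c) c]
      have key : cconv c (n + 1 - c) = cconv (c-1) (n+1-c) + cconv (c+1) (n-c) := by
        have h := cconv_rec (c-1) (n-c)
        have e1 : c - 1 + 1 = c := by omega
        have e2 : n - c + 1 = n + 1 - c := by omega
        have e3 : c - 1 + 2 = c + 1 := by omega
        rwa [e1, e2, e3] at h
      exact key.symm

open scoped Classical in
lemma card_avF (n : ℕ) : (avF n).card = catalan n := by
  rcases Nat.eq_zero_or_pos n with rfl | hn
  · have h0 : ((avF 0).filter (fun l => dp l = 0)).card = 1 := by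
      rw [card_dp_zero]; simp
    have : (avF 0).filter (fun l => dp l = 0) = avF 0 := by
      apply Finset.filter_true_of_mem
      intro l hl
      have := avF_length hl
      cases l with
      | nil => rfl
      | cons a t => simp at this
    rw [← this, h0, catalan_zero]
  · have hfull : (avF n).filter (fun l => 1 ≤ dp l) = avF n := by
      apply Finset.filter_true_of_mem
      intro l hl
      apply one_le_dp
      intro h
      have := avF_length hl
      rw [h] at this
      simp at this
      omega
    rw [← hfull, card_filter_le_dp n 1]
    have : ∑ d ∈ Finset.Icc 1 n, ((avF n).filter (fun l => dp l = d)).card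
        = ∑ d ∈ Finset.Icc 1 n, cconv d (n - d) := by
      apply Finset.sum_congr rfl
      intro d hd
      rw [Finset.mem_Icc] at hd
      exact card_dp_eq n d hd.1 hd.2
    rw [this]
    have hsum : ∑ d ∈ Finset.Icc 1 n, cconv d (n - d)
        = ∑ e ∈ Finset.range ((n-1) + 1), cconv (1 + e) ((n-1) - e) := by
      rw [← Finset.Ico_add_one_right_eq_Icc, Finset.sum_Ico_eq_sum_range]
      apply Finset.sum_congr (by congr 1; omega)
      intro e _
      congr 1
      omega
    rw [hsum, cconv_sum (n-1) 1, cconv_two]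
    congr 1
    omega

lemma cons_getElem_sublist {l : List ℕ} {i j : ℕ} (hij : i < j) (hi : i < l.length)
    {t : List ℕ} (ht : t <+ l.drop j) : l[i] :: t <+ l.drop i := by
  rw [← List.getElem_cons_drop hi]
  apply List.Sublist.cons₂
  calc t <+ l.drop j := ht
    _ = List.drop (j - (i+1)) (l.drop (i+1)) := by rw [List.drop_drop]; congr 1; omega
    _ <+ l.drop (i+1) := List.drop_sublist _ _

lemma hasInc_iff_indices (l : List ℕ) :
    HasInc l ↔ ∃ (i j k : ℕ) (hi : i < l.length) (hj : j < l.length) (hk : k < l.length),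
      i < j ∧ j < k ∧ l[i] < l[j] ∧ l[j] < l[k] := by
  constructor
  · rintro ⟨a, b, c, hab, hbc, hsub⟩
    rw [List.sublist_iff_exists_fin_orderEmbedding_get_eq] at hsub
    obtain ⟨f, hf⟩ := hsub
    have l0 : ([a,b,c] : List ℕ).length = 3 := rfl
    refine ⟨f ⟨0, by omega⟩, f ⟨1, by omega⟩, f ⟨2, by omega⟩,
      (f ⟨0, by omega⟩).isLt, (f ⟨1, by omega⟩).isLt, (f ⟨2, by omega⟩).isLt, ?_, ?_, ?_, ?_⟩
    · exact f.strictMono (by simp [Fin.lt_def])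
    · exact f.strictMono (by simp [Fin.lt_def])
    · have h0 := hf ⟨0, by omega⟩
      have h1 := hf ⟨1, by omega⟩
      simp only [List.get_eq_getElem] at h0 h1
      simp only [List.getElem_cons_zero, List.getElem_cons_succ] at h0 h1
      rw [← h0, ← h1]
      exact hab
    · have h1 := hf ⟨1, by omega⟩
      have h2 := hf ⟨2, by omega⟩
      simp only [List.get_eq_getElem] at h1 h2
      simp only [List.getElem_cons_zero, List.getElem_cons_succ] at h1 h2
      rw [← h1, ← h2]
      exact hbc
  · rintro ⟨i, j, k, hi, hj, hk, hij, hjk, h1, h2⟩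
    refine ⟨l[i], l[j], l[k], h1, h2, ?_⟩
    have s3 : [l[k]] <+ l.drop k := by
      rw [← List.getElem_cons_drop hk]
      exact (List.nil_sublist _).cons₂ _
    have s2 : [l[j], l[k]] <+ l.drop j := cons_getElem_sublist hjk hj s3
    have s1 : [l[i], l[j], l[k]] <+ l.drop i := cons_getElem_sublist hij hi s2
    exact s1.trans (List.drop_sublist _ _)

theorem card_avoiding_123_eq_catalan (n : ℕ) :
    (Finset.univ.filter fun π : Equiv.Perm (Fin n) =>
        ¬ ∃ i j k : Fin n, i < j ∧ j < k ∧ π i < π j ∧ π j < π k).card = catalan n := by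
  rw [← card_avF n]
  apply Finset.card_bij (fun π _ => List.ofFn (fun i => (π i : ℕ)))
  · -- maps into avF n
    intro π hπ
    rw [Finset.mem_filter] at hπ
    have hinj : Function.Injective (fun i : Fin n => (π i : ℕ)) := by
      intro i j h
      exact π.injective (Fin.val_injective h)
    refine mem_avF.2 ⟨?_, ?_⟩
    · apply List.perm_of_nodup_nodup_toFinset_eq (List.nodup_ofFn.2 hinj) List.nodup_range
      ext x
      simp only [List.mem_toFinset, List.mem_ofFn, Set.mem_range, List.mem_range]
      constructor
      · rintro ⟨i, rfl⟩
        exact (π i).isLt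
      · intro hx
        exact ⟨π.symm ⟨x, hx⟩, by simp⟩
    · intro hInc
      rw [hasInc_iff_indices] at hInc
      obtain ⟨i, j, k, hi, hj, hk, hij, hjk, h1, h2⟩ := hInc
      simp only [List.length_ofFn] at hi hj hk
      simp only [List.getElem_ofFn] at h1 h2
      exact hπ.2 ⟨⟨i, hi⟩, ⟨j, hj⟩, ⟨k, hk⟩, by rw [Fin.lt_def]; exact hij,
        by rw [Fin.lt_def]; exact hjk, by rw [Fin.lt_def]; exact h1,
        by rw [Fin.lt_def]; exact h2⟩
  · -- injective
    intro π₁ _ π₂ _ heq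
    rw [List.ofFn_inj] at heq
    ext i
    exact congrFun heq i ▸ rfl
  · -- surjective
    intro l hl
    have hlen : l.length = n := avF_length hl
    have hnd : l.Nodup := avF_nodup hl
    set f : Fin n → Fin n := fun i => ⟨l[(i : ℕ)]'(by omega), avF_mem_lt hl (l.getElem_mem _)⟩
      with hf
    have hinj : Function.Injective f := by
      intro i j h
      have h2 : l[(i : ℕ)]'(by omega) = l[(j : ℕ)]'(by omega) := by
        simpa [hf] using congrArg Fin.val h
      have h3 : (⟨(i : ℕ), by omega⟩ : Fin l.length) = ⟨(j : ℕ), by omega⟩ :=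
        List.nodup_iff_injective_getElem.1 hnd h2
      simpa [Fin.ext_iff] using h3
    let π : Equiv.Perm (Fin n) := Equiv.ofBijective f (Finite.injective_iff_bijective.1 hinj)
    have hπf : ∀ i, π i = f i := fun i => rfl
    refine ⟨π, ?_, ?_⟩
    · rw [Finset.mem_filter]
      refine ⟨Finset.mem_univ _, ?_⟩
      rintro ⟨i, j, k, hij, hjk, h1, h2⟩
      apply (mem_avF.1 hl).2
      rw [hasInc_iff_indices]
      rw [Fin.lt_def] at hij hjk
      rw [hπf, hπf] at h1 h2
      rw [Fin.lt_def] at h1 h2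
      exact ⟨i, j, k, by omega, by omega, by omega, hij, hjk, by simpa [hf] using h1,
        by simpa [hf] using h2⟩
    · apply List.ext_getElem (by simp [hlen])
      intro m h₁ h₂
      simp only [List.getElem_ofFn]
      rw [hπf]
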